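/- There exists an absolute constant c > 0 such that: (i) for every real u > 0 with u ≠ 1 and every (s,t) ∈ S_u one has |s| ≤ c and 0 < t ≤ c; and (ii) for all coprime positive integers a ≠ b and every real X > 0, the region R(X) is contained in [−c√X, c√X] × (0, c·√(X/|a² − b²|)]. -/
import Mathlib


open scoped Classical

open scoped Classical

/-- `p_u(s,t)`. -/
noncomputable def pForm (u s t : ℝ) : ℝ :=
  -2 * s ^ 2 - ((1 - u ^ 2) / |1 - u ^ 2|) * t ^ 2 +
    (4 / Real.sqrt |1 - u ^ 2|) * s * t

/-- `q_u(s,t)`. -/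
noncomputable def qForm (u s t : ℝ) : ℝ :=
  2 * s ^ 2 - ((1 - u ^ 2) / |1 - u ^ 2|) * t ^ 2

/-- `r_u(s,t)`. -/
noncomputable def rForm (u s t : ℝ) : ℝ :=
  2 * s ^ 2 - (2 * (1 - u ^ 2) / Real.sqrt |1 - u ^ 2|) * s * t +
    ((1 - u ^ 2) / |1 - u ^ 2|) * t ^ 2

/-- The region `S_u`. -/
noncomputable def Sregion (u : ℝ) : Set (ℝ × ℝ) :=
  {p | 0 < p.2 ∧ 0 < pForm u p.1 p.2 ∧ pForm u p.1 p.2 ≤ 1 ∧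
    0 < qForm u p.1 p.2 ∧ qForm u p.1 p.2 ≤ 1 ∧ 0 < rForm u p.1 p.2}

/-- `Q₁(s,t)` with real arguments. -/
noncomputable def Q1r (a b : ℤ) (s t : ℝ) : ℝ :=
  2 * s ^ 2 + ((a : ℝ) ^ 2 - (b : ℝ) ^ 2) * t ^ 2 - 4 * (a : ℝ) * s * t

/-- `Q₂(s,t)` with real arguments. -/
noncomputable def Q2r (a b : ℤ) (s t : ℝ) : ℝ :=
  -2 * s ^ 2 + ((a : ℝ) ^ 2 - (b : ℝ) ^ 2) * t ^ 2

/-- `Q₃(s,t)` with real arguments. -/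
noncomputable def Q3r (a b : ℤ) (s t : ℝ) : ℝ :=
  -2 * (a : ℝ) * s ^ 2 + 2 * ((a : ℝ) ^ 2 - (b : ℝ) ^ 2) * s * t -
    (a : ℝ) * ((a : ℝ) ^ 2 - (b : ℝ) ^ 2) * t ^ 2

/-- The region `R(X)`. -/
noncomputable def Rregion (a b : ℤ) (X : ℝ) : Set (ℝ × ℝ) :=
  {p | 0 < p.2 ∧ Q3r a b p.1 p.2 < 0 ∧
    -X ≤ Q1r a b p.1 p.2 ∧ Q1r a b p.1 p.2 < 0 ∧
    -X ≤ Q2r a b p.1 p.2 ∧ Q2r a b p.1 p.2 < 0}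

/-- The region `R′(X)`. -/
noncomputable def Rregion' (a b : ℤ) (X : ℝ) : Set (ℝ × ℝ) :=
  {p ∈ Rregion a b X | p.1 * (p.1 - (a : ℝ) * p.2) ≠ 0 ∧
    2 * (a : ℝ) * p.1 ≠ ((a : ℝ) ^ 2 - (b : ℝ) ^ 2) * p.2}



private lemma abs_le_of_sq_le' (x y : ℝ) (hy : 0 ≤ y) (h : x ^ 2 ≤ y ^ 2) : |x| ≤ y := by
  have := Real.sqrt_le_sqrt h
  rwa [Real.sqrt_sq_eq_abs, Real.sqrt_sq hy] at this

set_option maxHeartbeats 1000000 in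
theorem Sregion_Rregion_bounded :
    ∃ c : ℝ, 0 < c ∧
      (∀ u : ℝ, 0 < u → u ≠ 1 → ∀ p ∈ Sregion u, |p.1| ≤ c ∧ 0 < p.2 ∧ p.2 ≤ c) ∧
      (∀ a b : ℤ, 0 < a → 0 < b → Int.gcd a b = 1 → a ≠ b → ∀ X : ℝ, 0 < X →
        Rregion a b X ⊆
          Set.Icc (-(c * Real.sqrt X)) (c * Real.sqrt X) ×ˢ
            Set.Ioc 0 (c * Real.sqrt (X / |(a : ℝ) ^ 2 - (b : ℝ) ^ 2|))) := by
  refine ⟨2, by norm_num, ?_, ?_⟩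
  · rintro u hu hu1 ⟨s, t⟩ hp
    obtain ⟨ht, hp1, hp2, hq1, hq2, -⟩ := hp
    simp only [pForm, qForm] at hp1 hp2 hq1 hq2
    refine ⟨?_, ht, ?_⟩ <;>
    · revert hp1 hp2 hq1 hq2
      have hA : 1 - u ^ 2 ≠ 0 := by
        intro h
        have h1 : u ^ 2 = 1 := by linarith
        have : u = 1 := by nlinarith
        exact hu1 this
      intro hp1 hp2 hq1 hq2
      rcases lt_or_gt_of_ne hA with hAneg | hApos
      · -- u > 1 case : ratio = -1
        have hr : (1 - u ^ 2) / |1 - u ^ 2| = -1 := by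
          rw [abs_of_neg hAneg, div_eq_iff (by linarith)]; ring
        rw [hr] at hq2
        first
        | · apply abs_le_of_sq_le' _ _ (by norm_num)
            nlinarith [sq_nonneg t]
        | · nlinarith [sq_nonneg s]
      · -- u < 1 case : ratio = 1
        have hr : (1 - u ^ 2) / |1 - u ^ 2| = 1 := by
          rw [abs_of_pos hApos]; exact div_self hA
        rw [hr] at hp1 hp2 hq1 hq2
        set D := Real.sqrt |1 - u ^ 2| with hDdef
        have hD0 : 0 < D := Real.sqrt_pos.mpr (by rwa [abs_of_pos hApos])
        have hD2 : D ^ 2 = 1 - u ^ 2 := by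
          rw [hDdef, Real.sq_sqrt (abs_nonneg _), abs_of_pos hApos]
        have hD1 : D ≤ 1 := by nlinarith [hD0, sq_nonneg u, hu]
        have hst : 0 < s * t := by
          by_contra h
          push_neg at h
          have h4 : 0 < 4 / D := by positivity
          have : 4 / D * (s * t) ≤ 0 := mul_nonpos_of_nonneg_of_nonpos h4.le h
          nlinarith [sq_nonneg s, sq_nonneg t]
        have hs : 0 < s := by
          by_contra h
          push_neg at h
          have : s * t ≤ 0 := mul_nonpos_of_nonpos_of_nonneg h ht.le
          linarith
        have h4D : 4 ≤ 4 / D := by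
          rw [le_div_iff₀ hD0]; linarith
        have hmul : 4 * (s * t) ≤ 4 / D * (s * t) :=
          mul_le_mul_of_nonneg_right h4D hst.le
        have hkey : 4 * s * t ≤ 2 + 2 * t ^ 2 := by nlinarith
        have ht2 : t ≤ 2 := by
          nlinarith [mul_pos hs ht, sq_nonneg (2 + 2 * t ^ 2 - 4 * s * t), mul_pos ht ht,
            mul_pos (mul_pos ht ht) (mul_pos ht ht), mul_pos hs hs]
        first
        | · apply abs_le_of_sq_le' _ _ (by norm_num)
            nlinarith
        | exact ht2
  · rintro a b ha hb - hab X hX ⟨s, t⟩ hp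
    obtain ⟨ht, -, h1l, h1u, h2l, h2u⟩ := hp
    simp only [Q1r, Q2r] at h1l h1u h2l h2u
    have haR : (1 : ℝ) ≤ (a : ℝ) := by exact_mod_cast ha
    have hbR : (1 : ℝ) ≤ (b : ℝ) := by exact_mod_cast hb
    have habR : (a : ℝ) ≠ (b : ℝ) := by exact_mod_cast hab
    simp only [Set.mem_prod, Set.mem_Icc, Set.mem_Ioc]
    set N : ℝ := (a : ℝ) ^ 2 - (b : ℝ) ^ 2 with hNdef
    clear_value N
    have hN : N ≠ 0 := by
      intro h
      rcases lt_or_gt_of_ne habR with h' | h' <;> nlinarith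
    have hsqX : (2 * Real.sqrt X) ^ 2 = 4 * X := by
      rw [mul_pow, Real.sq_sqrt hX.le]; ring
    have main : |s| ≤ 2 * Real.sqrt X ∧ t ≤ 2 * Real.sqrt (X / |N|) := by
      rcases lt_or_gt_of_ne hN with hNneg | hNpos
      · have habs : |N| = -N := abs_of_neg hNneg
        constructor
        · apply abs_le_of_sq_le' _ _ (by positivity)
          rw [hsqX]; nlinarith
        · have hXN : (2 * Real.sqrt (X / |N|)) ^ 2 = 4 * (X / |N|) := by
            rw [mul_pow, Real.sq_sqrt (by positivity)]; ring
          have ht2 : t ^ 2 ≤ 4 * (X / |N|) := by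
            rw [habs, show (4:ℝ) * (X / -N) = 4 * X / (-N) by ring,
              le_div_iff₀ (by linarith)]
            nlinarith
          have habs' : |t| ≤ 2 * Real.sqrt (X / |N|) :=
            abs_le_of_sq_le' _ _ (by positivity) (by rw [hXN]; exact ht2)
          exact (le_abs_self t).trans habs'
      · have habs : |N| = N := abs_of_pos hNpos
        have hNa : N ≤ (a : ℝ) ^ 2 := by nlinarith
        have hs : 0 < s := by
          have h4 : 0 < 4 * (a : ℝ) * (s * t) := by nlinarith
          by_contra h
          push_neg at h
          have : s * t ≤ 0 := mul_nonpos_of_nonpos_of_nonneg h ht.le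
          nlinarith
        have hsum : 4 * (a : ℝ) * s * t - 2 * N * t ^ 2 ≤ 2 * X := by linarith
        have hB : N * t ^ 2 < 2 * s ^ 2 := by linarith
        have hNt : N * t ^ 2 ≤ 4 * X := by
          by_contra hcon
          push_neg at hcon
          have h4ast : 4 * (a : ℝ) * s * t < 5 / 2 * (N * t ^ 2) := by nlinarith
          have hpos : 0 < 4 * (a : ℝ) * s * t := by nlinarith [mul_pos hs ht]
          have hsq : (4 * (a : ℝ) * s * t) * (4 * (a : ℝ) * s * t) <
              (5 / 2 * (N * t ^ 2)) * (5 / 2 * (N * t ^ 2)) :=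
            mul_self_lt_mul_self hpos.le h4ast
          have e3 : (0:ℝ) < (N * t ^ 2) ^ 2 := by positivity
          nlinarith [hsq, e3,
            mul_le_mul_of_nonneg_right hNa (mul_nonneg (sq_nonneg s) (sq_nonneg t)),
            mul_lt_mul_of_pos_right hB (show (0:ℝ) < N * t ^ 2 by positivity)]
        constructor
        · apply abs_le_of_sq_le' _ _ (by positivity)
          rw [hsqX]; nlinarith
        · have hXN : (2 * Real.sqrt (X / |N|)) ^ 2 = 4 * (X / |N|) := by
            rw [mul_pow, Real.sq_sqrt (by positivity)]; ring
          have ht2 : t ^ 2 ≤ 4 * (X / |N|) := by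
            rw [habs, show (4:ℝ) * (X / N) = 4 * X / N by ring, le_div_iff₀ hNpos]
            linarith
          have habs' : |t| ≤ 2 * Real.sqrt (X / |N|) :=
            abs_le_of_sq_le' _ _ (by positivity) (by rw [hXN]; exact ht2)
          exact (le_abs_self t).trans habs'
    obtain ⟨hs1, ht1⟩ := main
    rw [abs_le] at hs1
    exact ⟨⟨hs1.1, hs1.2⟩, ht, ht1⟩
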